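/- Let G be any two-by-two game and let μ be a mixed quantum strategy for Player Two. Then there exists a real linear subspace V of ℍ ≅ ℝ⁴ such that the set of unit quaternions p that are optimal responses for Player One to μ equals the intersection of the unit sphere S³ with V. -/

import Mathlib

noncomputable section

open MeasureTheory

local notation "ℍ" => Quaternion ℝ

instance : MeasurableSpace (Quaternion ℝ) := borel _
instance : BorelSpace (Quaternion ℝ) := ⟨rfl⟩

/-- The four real coordinates of a quaternion: `p = π₁(p) + π₂(p)i + π₃(p)j + π₄(p)k`. -/
def piQ (t : Fin 4) (p : ℍ) : ℝ := ![p.re, p.imI, p.imJ, p.imK] t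

/-- The standard inner product on ℍ ≅ ℝ⁴. -/
def qinner (p q : ℍ) : ℝ := ∑ t : Fin 4, piQ t p * piQ t q

/-- The quaternions `i`, `j`, `k`. -/
def qI : ℍ := ⟨0, 1, 0, 0⟩
def qJ : ℍ := ⟨0, 0, 1, 0⟩
def qK : ℍ := ⟨0, 0, 0, 1⟩

/-- A mixed quantum strategy: a Borel probability measure on the unit quaternions. -/
def IsMixed (μ : Measure ℍ) : Prop :=
  IsProbabilityMeasure μ ∧ μ {p : ℍ | ‖p‖ = 1} = 1

/-- Quantum payoff with payoff vector `X`: `P^Q(p,q) = Σ_t π_t(pq)² X_t`. -/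
def payoff (X : Fin 4 → ℝ) (p q : ℍ) : ℝ :=
  ∑ t : Fin 4, (piQ t (p * q)) ^ 2 * X t

/-- Expected payoff of a pair of mixed strategies. -/
def payoffM (X : Fin 4 → ℝ) (ν μ : Measure ℍ) : ℝ :=
  ∫ p, ∫ q, payoff X p q ∂μ ∂ν

/-- Mixed-strategy Nash equilibrium of the quantum game with payoff vectors `X`, `Y`. -/
def IsNash (X Y : Fin 4 → ℝ) (ν μ : Measure ℍ) : Prop :=
  IsMixed ν ∧ IsMixed μ ∧
    (∀ ν' : Measure ℍ, IsMixed ν' → payoffM X ν' μ ≤ payoffM X ν μ) ∧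
    (∀ μ' : Measure ℍ, IsMixed μ' → payoffM Y ν μ' ≤ payoffM Y ν μ)

/-- Equivalence of mixed quantum strategies. -/
def StratEquiv (μ μ' : Measure ℍ) : Prop :=
  ∀ p : ℍ, ‖p‖ = 1 → ∀ t : Fin 4,
    ∫ q, (piQ t (p * q)) ^ 2 ∂μ = ∫ q, (piQ t (p * q)) ^ 2 ∂μ'

/-- Equivalence of pairs of mixed strategies: `(ν,μ) ∼ (ν',μ')` iff there is a unit
quaternion `u` with `ν' ∼ ν·u` and `μ' ∼ u⁻¹·μ`. -/
def PairEquiv (ν μ ν' μ' : Measure ℍ) : Prop :=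
  ∃ u : ℍ, ‖u‖ = 1 ∧
    StratEquiv (Measure.map (fun p => p * u) ν) ν' ∧
    StratEquiv (Measure.map (fun q => u⁻¹ * q) μ) μ'

/-- A generic two-by-two game: all payoffs distinct and all pairwise sums distinct. -/
def Generic (X Y : Fin 4 → ℝ) : Prop :=
  Function.Injective X ∧ Function.Injective Y ∧
    (∀ s t s' t' : Fin 4, s < t → s' < t' → X s + X t = X s' + X t' → s = s' ∧ t = t') ∧
    (∀ s t s' t' : Fin 4, s < t → s' < t' → Y s + Y t = Y s' + Y t' → s = s' ∧ t = t')

/-- `K(p) = π₁(p)π₂(p)π₃(p)π₄(p)`. -/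
def K (p : ℍ) : ℝ := p.re * p.imI * p.imJ * p.imK

/-- Intertwined quadruple of quaternions. -/
def Intertwined (p q r s : ℍ) : Prop :=
  ∃ α : ℝ, α ≠ 0 ∧ ∀ X Y : ℝ, α * K (X • p + Y • q) = K (X • r + Y • s)

/-- Fully intertwined quadruple of quaternions. -/
def FullyIntertwined (p q r s : ℍ) : Prop :=
  Intertwined p q r s ∧ Intertwined p r q s

/-- `p` is an optimal response for Player One to the mixed strategy `μ`. -/
def Optimal₁ (X : Fin 4 → ℝ) (μ : Measure ℍ) (p : ℍ) : Prop :=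
  ‖p‖ = 1 ∧ ∀ p' : ℍ, ‖p'‖ = 1 → ∫ q, payoff X p' q ∂μ ≤ ∫ q, payoff X p q ∂μ

/-- `q` is an optimal response for Player Two to the mixed strategy `ν`. -/
def Optimal₂ (Y : Fin 4 → ℝ) (ν : Measure ℍ) (q : ℍ) : Prop :=
  ‖q‖ = 1 ∧ ∀ q' : ℍ, ‖q'‖ = 1 → ∫ p, payoff Y p q' ∂ν ≤ ∫ p, payoff Y p q ∂ν
namespace OptAux

lemma piQ_add (t : Fin 4) (x y : ℍ) : piQ t (x + y) = piQ t x + piQ t y := by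
  fin_cases t <;> simp [piQ]

lemma piQ_smul (t : Fin 4) (c : ℝ) (x : ℍ) : piQ t (c • x) = c * piQ t x := by
  fin_cases t <;> simp [piQ]

lemma piQ_zero (t : Fin 4) : piQ t (0 : ℍ) = 0 := by
  fin_cases t <;> simp [piQ] <;> rfl

lemma abs_piQ_le (t : Fin 4) (x : ℍ) : |piQ t x| ≤ ‖x‖ := by
  have h : (piQ t x) ^ 2 ≤ ‖x‖ ^ 2 := by
    have : ‖x‖ ^ 2 = Quaternion.normSq x := by
      rw [sq, ← Quaternion.normSq_eq_norm_mul_self]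
    rw [this, Quaternion.normSq_def']
    fin_cases t <;> simp [piQ] <;> nlinarith [sq_nonneg x.re, sq_nonneg x.imI,
      sq_nonneg x.imJ, sq_nonneg x.imK]
  exact abs_le.mpr (abs_le_of_sq_le_sq' h (norm_nonneg x))

lemma qinner_self (p : ℍ) : qinner p p = ‖p‖ ^ 2 := by
  have : ‖p‖ ^ 2 = Quaternion.normSq p := by
    rw [sq, ← Quaternion.normSq_eq_norm_mul_self]
  rw [this, Quaternion.normSq_def']
  simp [qinner, piQ, Fin.sum_univ_four, sq]

lemma qinner_add_left (x y v : ℍ) : qinner (x + y) v = qinner x v + qinner y v := by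
  simp [qinner, piQ_add, add_mul, Finset.sum_add_distrib]

lemma qinner_smul_left (c : ℝ) (x v : ℍ) : qinner (c • x) v = c * qinner x v := by
  simp [qinner, piQ_smul, Finset.mul_sum, mul_assoc]

lemma qinner_comm (x v : ℍ) : qinner x v = qinner v x := by
  simp [qinner, mul_comm]

lemma qinner_zero_left (v : ℍ) : qinner 0 v = 0 := by
  simp [qinner, piQ_zero]

/-- Bilinear integrand. -/
def b (X : Fin 4 → ℝ) (p p' q : ℍ) : ℝ :=
  ∑ t : Fin 4, piQ t (p * q) * piQ t (p' * q) * X t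

lemma payoff_eq_b (X : Fin 4 → ℝ) (p q : ℍ) : payoff X p q = b X p p q := by
  unfold payoff b
  exact Finset.sum_congr rfl fun t _ => by ring

lemma b_symm (X : Fin 4 → ℝ) (p p' q : ℍ) : b X p p' q = b X p' p q := by
  unfold b
  exact Finset.sum_congr rfl fun t _ => by ring

lemma b_add_left (X : Fin 4 → ℝ) (x y p' q : ℍ) :
    b X (x + y) p' q = b X x p' q + b X y p' q := by
  unfold b
  rw [← Finset.sum_add_distrib]
  refine Finset.sum_congr rfl fun t _ => ?_
  rw [add_mul, piQ_add]
  ring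

lemma b_smul_left (X : Fin 4 → ℝ) (c : ℝ) (x p' q : ℍ) :
    b X (c • x) p' q = c * b X x p' q := by
  unfold b
  rw [Finset.mul_sum]
  refine Finset.sum_congr rfl fun t _ => ?_
  rw [smul_mul_assoc, piQ_smul]
  ring

lemma b_zero_left (X : Fin 4 → ℝ) (p' q : ℍ) : b X 0 p' q = 0 := by
  unfold b
  refine Finset.sum_eq_zero fun t _ => by rw [zero_mul, piQ_zero, zero_mul, zero_mul]

lemma continuous_b (X : Fin 4 → ℝ) (p p' : ℍ) : Continuous fun q => b X p p' q := by
  unfold b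
  refine continuous_finset_sum _ fun t _ => ?_
  have hm : Continuous fun q : ℍ => p * q := continuous_const.mul continuous_id
  have hm' : Continuous fun q : ℍ => p' * q := continuous_const.mul continuous_id
  have key : ∀ (t : Fin 4) (r : ℍ), Continuous fun q : ℍ => piQ t (r * q) := by
    intro t r
    have hr : Continuous fun q : ℍ => r * q := continuous_const.mul continuous_id
    fin_cases t
    · simp only [piQ, Matrix.cons_val_zero]; exact Quaternion.continuous_re.comp hr
    · simp only [piQ, Matrix.cons_val_one, Matrix.head_cons]
      exact Quaternion.continuous_imI.comp hr
    · simp only [piQ, Matrix.cons_val_two, Matrix.tail_cons, Matrix.head_cons]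
      exact Quaternion.continuous_imJ.comp hr
    · simp only [piQ, Matrix.cons_val_three, Matrix.tail_cons, Matrix.head_cons]
      exact Quaternion.continuous_imK.comp hr
  exact ((key t p).mul (key t p')).mul continuous_const

lemma ae_unit {μ : Measure ℍ} (hμ : IsMixed μ) : ∀ᵐ q ∂μ, ‖q‖ = 1 := by
  haveI := hμ.1
  have hm : MeasurableSet {p : ℍ | ‖p‖ = 1} :=
    (isClosed_eq continuous_norm continuous_const).measurableSet
  rw [ae_iff]
  have : {q : ℍ | ¬ ‖q‖ = 1} = {p : ℍ | ‖p‖ = 1}ᶜ := rfl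
  rw [this, measure_compl hm (measure_ne_top μ _), hμ.2, measure_univ, tsub_self]

lemma integrable_b {μ : Measure ℍ} (hμ : IsMixed μ) (X : Fin 4 → ℝ) (p p' : ℍ) :
    Integrable (fun q => b X p p' q) μ := by
  haveI := hμ.1
  refine Integrable.mono' (integrable_const (‖p‖ * ‖p'‖ * ∑ t : Fin 4, |X t|))
    (continuous_b X p p').aestronglyMeasurable ?_
  filter_upwards [ae_unit hμ] with q hq
  rw [Real.norm_eq_abs]
  calc |b X p p' q| ≤ ∑ t : Fin 4, |piQ t (p * q) * piQ t (p' * q) * X t| :=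
        Finset.abs_sum_le_sum_abs _ _
    _ ≤ ∑ t : Fin 4, ‖p‖ * ‖p'‖ * |X t| := by
        refine Finset.sum_le_sum fun t _ => ?_
        rw [abs_mul, abs_mul]
        have h1 : |piQ t (p * q)| ≤ ‖p‖ := by
          have := abs_piQ_le t (p * q); rwa [norm_mul, hq, mul_one] at this
        have h2 : |piQ t (p' * q)| ≤ ‖p'‖ := by
          have := abs_piQ_le t (p' * q); rwa [norm_mul, hq, mul_one] at this
        have := mul_le_mul h1 h2 (abs_nonneg _) (norm_nonneg p)
        exact mul_le_mul_of_nonneg_right this (abs_nonneg _)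
    _ = ‖p‖ * ‖p'‖ * ∑ t : Fin 4, |X t| := by rw [Finset.mul_sum]

end OptAux

/-- Given Player Two's mixed strategy `μ`, Player One's optimal-response set is
the intersection of the unit sphere `S³` with a real linear subspace of ℍ ≅ ℝ⁴. -/
theorem optimal_set_eq_sphere_inter_subspace (X : Fin 4 → ℝ) (μ : Measure ℍ)
    (hμ : IsMixed μ) :
    ∃ V : Submodule ℝ ℍ,
      {p : ℍ | Optimal₁ X μ p} = {p : ℍ | ‖p‖ = 1} ∩ (V : Set ℍ) := by
  classical
  by_cases hne : ∃ p₀ : ℍ, Optimal₁ X μ p₀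
  · obtain ⟨p₀, hp₀⟩ := hne
    open OptAux in
    set F : ℍ → ℝ := fun p => ∫ q, payoff X p q ∂μ with hF
    set B : ℍ → ℍ → ℝ := fun p p' => ∫ q, OptAux.b X p p' q ∂μ with hB
    set M : ℝ := F p₀ with hM
    have hFB : ∀ p, F p = B p p := by
      intro p
      simp only [hF, hB, OptAux.payoff_eq_b]
    have Bsymm : ∀ p p', B p p' = B p' p := by
      intro p p'
      simp only [hB]
      exact integral_congr_ae (Filter.Eventually.of_forall fun q => OptAux.b_symm X p p' q)
    have Badd : ∀ x y v, B (x + y) v = B x v + B y v := by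
      intro x y v
      simp only [hB]
      rw [← integral_add (OptAux.integrable_b hμ X x v) (OptAux.integrable_b hμ X y v)]
      exact integral_congr_ae (Filter.Eventually.of_forall fun q => OptAux.b_add_left X x y v q)
    have Bsmul : ∀ (c : ℝ) x v, B (c • x) v = c * B x v := by
      intro c x v
      simp only [hB]
      rw [← integral_const_mul]
      exact integral_congr_ae (Filter.Eventually.of_forall fun q => OptAux.b_smul_left X c x v q)
    have Bzero : ∀ v, B 0 v = 0 := by
      intro v
      simp only [hB]
      simp [OptAux.b_zero_left]
    -- diagonal upper bound
    have hdiag : ∀ w : ℍ, B w w ≤ M * qinner w w := by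
      intro w
      rcases eq_or_ne w 0 with rfl | hw
      · rw [Bzero, OptAux.qinner_zero_left, mul_zero]
      · have hnw : (0:ℝ) < ‖w‖ := norm_pos_iff.mpr hw
        set c : ℝ := ‖w‖⁻¹ with hc
        have hcpos : 0 < c := inv_pos.mpr hnw
        have hu : ‖c • w‖ = 1 := by
          rw [norm_smul, Real.norm_eq_abs, abs_of_pos hcpos, hc, inv_mul_cancel₀ hnw.ne']
        have h1 : F (c • w) ≤ M := hp₀.2 _ hu
        have h2 : F (c • w) = c ^ 2 * B w w := by
          rw [hFB, Bsmul, Bsymm, Bsmul, Bsymm]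
          ring
        have h3 : c ^ 2 * B w w ≤ M := h2 ▸ h1
        have h4 : qinner w w = ‖w‖ ^ 2 := OptAux.qinner_self w
        have h5 : c ^ 2 * ‖w‖ ^ 2 = 1 := by
          rw [hc]
          field_simp
        have h6 : ‖w‖ ^ 2 * (c ^ 2 * B w w) ≤ ‖w‖ ^ 2 * M :=
          mul_le_mul_of_nonneg_left h3 (sq_nonneg _)
        have h7 : ‖w‖ ^ 2 * (c ^ 2 * B w w) = B w w := by
          rw [show ‖w‖ ^ 2 * (c ^ 2 * B w w) = c ^ 2 * ‖w‖ ^ 2 * B w w from by ring, h5, one_mul]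
        rw [h4]
        linarith
    -- bilinear-ish expansions
    have hexp : ∀ (p v : ℍ) (ε : ℝ),
        B (p + ε • v) (p + ε • v) = B p p + 2 * ε * B p v + ε ^ 2 * B v v := by
      intro p v ε
      have e1 : B p (p + ε • v) = B p p + ε * B v p := by
        rw [Bsymm p (p + ε • v), Badd, Bsmul]
      have e2 : B v (p + ε • v) = B p v + ε * B v v := by
        rw [Bsymm v (p + ε • v), Badd, Bsmul]
      rw [Badd, Bsmul, e1, e2, Bsymm v p]
      ring
    have qexp : ∀ (p v : ℍ) (ε : ℝ),
        qinner (p + ε • v) (p + ε • v)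
          = qinner p p + 2 * ε * qinner p v + ε ^ 2 * qinner v v := by
      intro p v ε
      have e1 : qinner p (p + ε • v) = qinner p p + ε * qinner v p := by
        rw [OptAux.qinner_comm p (p + ε • v), OptAux.qinner_add_left, OptAux.qinner_smul_left]
      have e2 : qinner v (p + ε • v) = qinner p v + ε * qinner v v := by
        rw [OptAux.qinner_comm v (p + ε • v), OptAux.qinner_add_left, OptAux.qinner_smul_left]
      rw [OptAux.qinner_add_left, OptAux.qinner_smul_left, e1, e2, OptAux.qinner_comm v p]
      ring
    refine ⟨{ carrier := {p : ℍ | ∀ v : ℍ, B p v = M * qinner p v}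
              zero_mem' := by
                intro v
                rw [Bzero, OptAux.qinner_zero_left, mul_zero]
              add_mem' := by
                intro a b ha hb v
                rw [Badd, OptAux.qinner_add_left, ha v, hb v]
                ring
              smul_mem' := by
                intro c x hx v
                rw [Bsmul, OptAux.qinner_smul_left, hx v]
                ring }, ?_⟩
    ext p
    simp only [Set.mem_setOf_eq, Set.mem_inter_iff, SetLike.mem_coe, Submodule.mem_mk,
      AddSubmonoid.mem_mk, AddSubsemigroup.mem_mk]
    constructor
    · intro hp
      have hp1 : ‖p‖ = 1 := hp.1
      refine ⟨hp1, ?_⟩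
      have hFpM : F p = M := le_antisymm (hp₀.2 p hp1) (hp.2 p₀ hp₀.1)
      have hqpp : qinner p p = 1 := by rw [OptAux.qinner_self, hp1, one_pow]
      have hBppM : B p p = M * qinner p p := by
        rw [hqpp, mul_one, ← hFB, hFpM]
      intro v
      set cc : ℝ := M * qinner p v - B p v with hcc
      set dd : ℝ := M * qinner v v - B v v with hdd
      have hddn : 0 ≤ dd := by
        have := hdiag v
        simp only [hdd]
        linarith
      have hkey : ∀ ε : ℝ, 0 ≤ 2 * ε * cc + ε ^ 2 * dd := by
        intro ε
        have h1 := hdiag (p + ε • v)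
        rw [hexp, qexp] at h1
        simp only [hcc, hdd]
        nlinarith [h1, hBppM]
      have hcc0 : cc = 0 := by
        rcases hddn.lt_or_eq with hdpos | hdzero
        · have h1 := hkey (-(cc / dd))
          have h2 : 2 * (-(cc / dd)) * cc + (-(cc / dd)) ^ 2 * dd = -(cc ^ 2) / dd := by
            field_simp
            ring
          rw [h2] at h1
          have h4 := mul_nonneg h1 hdpos.le
          rw [div_mul_cancel₀ _ hdpos.ne'] at h4
          nlinarith [sq_nonneg cc]
        · have h1 := hkey 1
          have h2 := hkey (-1)
          rw [← hdzero] at h1 h2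
          nlinarith
      simp only [hcc] at hcc0
      linarith
    · rintro ⟨hp1, hpV⟩
      have hqpp : qinner p p = 1 := by rw [OptAux.qinner_self, hp1, one_pow]
      have hFpM : F p = M := by
        rw [hFB, hpV p, hqpp, mul_one]
      exact ⟨hp1, fun p' hp' => by
        have := hp₀.2 p' hp'
        calc (∫ q, payoff X p' q ∂μ) ≤ M := this
          _ = ∫ q, payoff X p q ∂μ := hFpM.symm⟩
  · refine ⟨⊥, ?_⟩
    ext p
    simp only [Set.mem_setOf_eq, Set.mem_inter_iff, SetLike.mem_coe, Submodule.mem_bot]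
    constructor
    · intro hp
      exact absurd ⟨p, hp⟩ hne
    · rintro ⟨hp, rfl⟩
      simp at hp
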